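/- Let F(x,y,p,d) = Σ_{n,k≥0} Σ_{π ∈ C_{n,k}} x^n y^k p^{sv(π)} d^{dsv(π)}, a well-defined formal power series in ℚ[[x,y,p,d]] (the coefficient of each monomial is a finite count). For each integer a ≥ 1 let B_a = 1 − y²·x^a·Σ_{j=1}^{a−1} x^j·(p·d^{a−j} − 1) ∈ ℚ[[x,y,p,d]] (so B₁ = 1); each B_a has constant term 1 and is invertible. Then F · (1 − Σ_{a≥1} x^a·y·B_a^{−1}) = 1, where the sum over a converges coefficientwise since the a-th summand has x-adic order at least a. (The polynomial y²x^aΣ_{j=1}^{a−1}x^j(p d^{a−j}−1) is the power-series meaning of the expression y²x^{a+1}((p x^{a−1} − d^{a−1})/(x/d − 1) − (x^{a−1} − 1)/(x−1)) appearing in the paper, so this is the statement F = 1/(1 − Σ_{a≥1} x^a y/(1 − y²x^{a+1}((px^{a−1}−d^{a−1})/(x/d−1) − (x^{a−1}−1)/(x−1)))).) -/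

import Mathlib

/-- The indices (0-based) of symmetric valleys of a list of naturals:
`i` is a symmetric valley if `L i > L (i+1)` and `L i = L (i+2)`. -/
def symValleyIdx (L : List ℕ) : Finset ℕ :=
  (Finset.range L.length).filter (fun i =>
    i + 2 < L.length ∧ L.getD i 0 > L.getD (i+1) 0 ∧ L.getD i 0 = L.getD (i+2) 0)

/-- `sv π`: the number of symmetric valleys of `π`. -/
def svL (L : List ℕ) : ℕ := (symValleyIdx L).card

/-- `dsv π`: the sum of the depths of the symmetric valleys of `π`. -/
def dsvL (L : List ℕ) : ℕ := ∑ i ∈ symValleyIdx L, (L.getD i 0 - L.getD (i+1) 0)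

/-- Variables: `X 0 = x`, `X 1 = y`, `X 2 = p`, `X 3 = d`. -/
noncomputable abbrev Xv : Fin 4 → MvPowerSeries (Fin 4) ℚ := MvPowerSeries.X

/-- `F(x,y,p,d) = Σ_{n,k≥0} Σ_{π ∈ C_{n,k}} x^n y^k p^{sv(π)} d^{dsv(π)}`, defined
coefficientwise. -/
noncomputable def Fdsv : MvPowerSeries (Fin 4) ℚ := fun m =>
  ((Finset.univ : Finset (Composition (m 0))).filter (fun c =>
    c.length = m 1 ∧ svL c.blocks = m 2 ∧ dsvL c.blocks = m 3)).card

/-- `B_a = 1 − y²·x^a·Σ_{j=1}^{a−1} x^j·(p·d^{a−j} − 1)` (so `B₁ = 1`); this is the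
power-series meaning of `1 − y²x^{a+1}((px^{a−1}−d^{a−1})/(x/d−1) − (x^{a−1}−1)/(x−1))`. -/
noncomputable def Bdsv (a : ℕ) : MvPowerSeries (Fin 4) ℚ :=
  1 - (Xv 1)^2 * (Xv 0)^a *
    ∑ j ∈ Finset.Icc 1 (a - 1), (Xv 0)^j * (Xv 2 * (Xv 3)^(a - j) - 1)

/-- `Σ_{a≥1} x^a·y·B_a⁻¹`, defined coefficientwise: since the `a`-th summand has `x`-adic
order at least `a`, only the terms with `1 ≤ a ≤ m 0` contribute to the coefficient of a
monomial `m`. -/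
noncomputable def Sdsv : MvPowerSeries (Fin 4) ℚ := fun m =>
  ∑ a ∈ Finset.Icc 1 (m 0), MvPowerSeries.coeff m ((Xv 0)^a * Xv 1 * (Bdsv a)⁻¹)


open scoped Classical

section aux

/-- `M` starts with a valley relative to a prepended `a`. -/
def startsVal (a : ℕ) (M : List ℕ) : Prop :=
  1 < M.length ∧ M.getD 0 0 < a ∧ M.getD 1 0 = a

instance (a : ℕ) (M : List ℕ) : Decidable (startsVal a M) := by
  unfold startsVal; infer_instance

lemma mem_symValleyIdx {L : List ℕ} {i : ℕ} :
    i ∈ symValleyIdx L ↔ i + 2 < L.length ∧ L.getD i 0 > L.getD (i+1) 0 ∧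
      L.getD i 0 = L.getD (i+2) 0 := by
  unfold symValleyIdx
  simp only [Finset.mem_filter, Finset.mem_range]
  constructor
  · rintro ⟨_, h⟩; exact h
  · rintro h; exact ⟨by omega, h⟩

lemma symValleyIdx_cons (a : ℕ) (M : List ℕ) :
    symValleyIdx (a :: M) =
      (if startsVal a M then {0} else ∅) ∪ (symValleyIdx M).image (· + 1) := by
  ext i
  cases i with
  | zero =>
    simp only [mem_symValleyIdx, Finset.mem_union, Finset.mem_image, Finset.mem_insert,
      Finset.mem_singleton]
    constructor
    · rintro ⟨h1, h2, h3⟩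
      have : startsVal a M := by
        constructor
        · simp at h1; omega
        · constructor
          · simpa using h2
          · simpa using h3.symm
      simp [this]
    · intro h
      rcases h with h | h
      · by_cases hs : startsVal a M
        · obtain ⟨h1, h2, h3⟩ := hs
          refine ⟨by simp; omega, by simpa using h2, by simpa using h3.symm⟩
        · simp [hs] at h
      · simp at h
  | succ n =>
    simp only [mem_symValleyIdx, Finset.mem_union, Finset.mem_image]
    constructor
    · rintro ⟨h1, h2, h3⟩
      right
      exact ⟨n, ⟨by simp at h1; omega, by simpa using h2, by simpa using h3⟩, rfl⟩
    · rintro (h | ⟨m, hm, hmn⟩)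
      · split at h <;> simp at h
      · obtain ⟨h1, h2, h3⟩ := hm
        have : m = n := by omega
        subst this
        refine ⟨by simp; omega, by simpa using h2, by simpa using h3⟩

lemma svL_cons (a : ℕ) (M : List ℕ) :
    svL (a :: M) = svL M + (if startsVal a M then 1 else 0) := by
  unfold svL
  rw [symValleyIdx_cons, Finset.card_union_of_disjoint, Finset.card_image_of_injective _
    (add_left_injective 1)]
  · split <;> simp [add_comm]
  · split
    · simp only [Finset.disjoint_singleton_left, Finset.mem_image]
      rintro ⟨m, _, hm⟩; omega
    · simp

lemma dsvL_cons (a : ℕ) (M : List ℕ) :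
    dsvL (a :: M) = dsvL M + (if startsVal a M then a - M.getD 0 0 else 0) := by
  unfold dsvL
  rw [symValleyIdx_cons, Finset.sum_union, Finset.sum_image (by intro x _ y _ h; simp only at h; omega)]
  · have : ∑ i ∈ symValleyIdx M, ((a :: M).getD (i+1) 0 - (a :: M).getD (i+1+1) 0)
        = ∑ i ∈ symValleyIdx M, (M.getD i 0 - M.getD (i+1) 0) := by
      apply Finset.sum_congr rfl; intro i _; simp
    rw [this]
    split <;> simp [add_comm]
  · split
    · simp only [Finset.disjoint_singleton_left, Finset.mem_image]
      rintro ⟨m, _, hm⟩; omega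
    · simp

@[simp] lemma svL_nil : svL [] = 0 := by simp [svL, symValleyIdx]
@[simp] lemma dsvL_nil : dsvL [] = 0 := by simp [dsvL, symValleyIdx]

/-- the finset of all block-lists of compositions of n -/
noncomputable def listset (n : ℕ) : Finset (List ℕ) :=
  Finset.image Composition.blocks (Finset.univ : Finset (Composition n))

lemma blocks_inj (n : ℕ) : Function.Injective (Composition.blocks (n := n)) := by
  intro a b h; cases a; cases b; simpa using h

lemma mem_listset {n : ℕ} {L : List ℕ} :
    L ∈ listset n ↔ (∀ x ∈ L, 0 < x) ∧ L.sum = n := by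
  unfold listset
  simp only [Finset.mem_image, Finset.mem_univ, true_and]
  constructor
  · rintro ⟨c, rfl⟩
    exact ⟨fun x hx => c.blocks_pos hx, c.blocks_sum⟩
  · rintro ⟨h1, h2⟩
    exact ⟨⟨L, fun hi => h1 _ hi, h2⟩, rfl⟩

noncomputable def cnt (P : List ℕ → Prop) (m : Fin 4 →₀ ℕ) : ℕ :=
  ((listset (m 0)).filter
    (fun L => L.length = m 1 ∧ svL L = m 2 ∧ dsvL L = m 3 ∧ P L)).card

noncomputable def ser (P : List ℕ → Prop) : MvPowerSeries (Fin 4) ℚ :=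
  fun m => (cnt P m : ℚ)

noncomputable def wt (r l s t : ℕ) : Fin 4 →₀ ℕ :=
  Finsupp.single 0 r + Finsupp.single 1 l + Finsupp.single 2 s + Finsupp.single 3 t

@[simp] lemma wt_apply0 (r l s t : ℕ) : wt r l s t 0 = r := by
  simp [wt, Finsupp.single_apply]
@[simp] lemma wt_apply1 (r l s t : ℕ) : wt r l s t 1 = l := by
  simp [wt, Finsupp.single_apply]
@[simp] lemma wt_apply2 (r l s t : ℕ) : wt r l s t 2 = s := by
  simp [wt, Finsupp.single_apply]
@[simp] lemma wt_apply3 (r l s t : ℕ) : wt r l s t 3 = t := by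
  simp [wt, Finsupp.single_apply]

lemma ser_prepend (r s t : ℕ) (hr : 0 < r) (P Q : List ℕ → Prop)
    (h1 : ∀ M : List ℕ, (∀ x ∈ M, 0 < x) → (P (r :: M) ↔ Q M))
    (h2 : ∀ L, P L → L.head? = some r)
    (h3 : ∀ M, (∀ x ∈ M, 0 < x) → Q M →
      svL (r::M) = svL M + s ∧ dsvL (r::M) = dsvL M + t) :
    ser P = (MvPowerSeries.monomial (wt r 1 s t)) 1 * ser Q := by
  apply MvPowerSeries.ext
  intro m
  rw [MvPowerSeries.coeff_monomial_mul]
  have hser : ∀ R m', MvPowerSeries.coeff m' (ser R) = (cnt R m' : ℚ) := fun _ _ => rfl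
  rw [hser]
  -- facts about elements counted by cnt P m
  have key : ∀ L, L ∈ (listset (m 0)).filter
      (fun L => L.length = m 1 ∧ svL L = m 2 ∧ dsvL L = m 3 ∧ P L) →
      ∃ M, L = r :: M ∧ (∀ x ∈ M, 0 < x) ∧ Q M ∧ M.sum = m 0 - r ∧
        M.length = m 1 - 1 ∧ svL M = m 2 - s ∧ dsvL M = m 3 - t ∧
        r ≤ m 0 ∧ 1 ≤ m 1 ∧ s ≤ m 2 ∧ t ≤ m 3 := by
    intro L hL
    rw [Finset.mem_filter, mem_listset] at hL
    obtain ⟨⟨hpos, hsum⟩, hlen, hsv, hdsv, hP⟩ := hL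
    obtain ⟨M, rfl⟩ : ∃ M, L = r :: M := by
      have := h2 L hP
      cases L with
      | nil => simp at this
      | cons x M => exact ⟨M, by simpa using this⟩
    have hposM : ∀ x ∈ M, 0 < x := fun x hx => hpos x (List.mem_cons_of_mem _ hx)
    have hQ : Q M := (h1 M hposM).1 hP
    obtain ⟨hs, ht⟩ := h3 M hposM hQ
    simp only [List.sum_cons] at hsum
    simp only [List.length_cons] at hlen
    exact ⟨M, rfl, hposM, hQ, by omega, by omega, by omega, by omega,
      by omega, by omega, by omega, by omega⟩
  by_cases hle : wt r 1 s t ≤ m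
  · rw [if_pos hle, hser, one_mul]
    norm_cast
    have hle' := Finsupp.le_def.1 hle
    have h0 := hle' 0; have h1' := hle' 1; have h2' := hle' 2; have h3' := hle' 3
    simp only [wt_apply0, wt_apply1, wt_apply2, wt_apply3] at h0 h1' h2' h3'
    unfold cnt
    apply Finset.card_nbij' List.tail (fun M => r :: M)
    · intro L hL
      obtain ⟨M, rfl, hposM, hQ, hsum, hlen, hsv, hdsv, _⟩ := key L hL
      rw [Finset.mem_coe, Finset.mem_filter, mem_listset]
      simp only [List.tail_cons, Finsupp.tsub_apply, wt_apply0, wt_apply1, wt_apply2, wt_apply3]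
      exact ⟨⟨hposM, hsum⟩, hlen, hsv, hdsv, hQ⟩
    · intro M hM
      rw [Finset.mem_coe, Finset.mem_filter, mem_listset] at hM
      simp only [Finsupp.tsub_apply, wt_apply0, wt_apply1, wt_apply2, wt_apply3] at hM
      obtain ⟨⟨hposM, hsum⟩, hlen, hsv, hdsv, hQ⟩ := hM
      obtain ⟨hs, ht⟩ := h3 M hposM hQ
      rw [Finset.mem_coe, Finset.mem_filter, mem_listset]
      refine ⟨⟨?_, ?_⟩, ?_, ?_, ?_, (h1 M hposM).2 hQ⟩
      · intro x hx
        rcases List.mem_cons.1 hx with rfl | hx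
        · exact hr
        · exact hposM x hx
      · simp [hsum]; omega
      · simp [hlen]; omega
      · rw [hs, hsv]; omega
      · rw [ht, hdsv]; omega
    · intro L hL
      obtain ⟨M, rfl, _⟩ := key L hL
      simp
    · intro M _
      simp
  · rw [if_neg hle]
    unfold cnt
    norm_cast
    rw [Finset.card_eq_zero, Finset.eq_empty_iff_forall_notMem]
    intro L hL
    obtain ⟨M, rfl, _, _, _, _, _, _, hr0, hl1, hs2, ht3⟩ := key L hL
    apply hle
    rw [Finsupp.le_def]
    intro i
    fin_cases i <;> simpa

lemma ind_split (a : ℕ) (T : List ℕ) (hT : ∀ x ∈ T, 0 < x)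
    (C0 C1 : Prop) (C2 : ℕ → Prop)
    (i0 : Decidable C0) (i1 : Decidable C1) (i2 : ∀ j : ℕ, Decidable (C2 j))
    (h1 : C1 ↔ (C0 ∧ ¬ startsVal a T))
    (h2 : ∀ j, C2 j ↔ (C0 ∧ T.head? = some j ∧ T.tail.head? = some a)) :
    (@ite ℕ C0 i0 1 0) = (@ite ℕ C1 i1 1 0) +
      ∑ j ∈ Finset.Icc 1 (a-1), (@ite ℕ (C2 j) (i2 j) 1 0) := by
  by_cases hCo : C0
  · by_cases hs : startsVal a T
    · rcases T with _ | ⟨x, _ | ⟨y, R⟩⟩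
      · exact absurd hs.1 (by simp)
      · exact absurd hs.1 (by simp)
      · obtain ⟨-, hx, hy⟩ := hs
        simp only [List.getD_cons_zero] at hx
        have hy' : y = a := by simpa using hy
        have hx1 : 1 ≤ x := hT x (by simp)
        have hsv : startsVal a (x::y::R) := ⟨by simp, by simpa using hx, by simpa using hy'⟩
        rw [if_pos hCo, if_neg (fun hc => ((h1.1 hc).2 hsv)),
          Finset.sum_eq_single_of_mem x (Finset.mem_Icc.2 ⟨hx1, by omega⟩)
            (fun b _ hb => if_neg (fun hc => by
              obtain ⟨-, hh, -⟩ := (h2 b).1 hc; simp at hh; omega)),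
          if_pos ((h2 x).2 ⟨hCo, by simp, by simp [hy']⟩)]
    · rw [if_pos hCo, if_pos (h1.2 ⟨hCo, hs⟩),
        Finset.sum_eq_zero (fun j hj => if_neg (fun hc => by
          rw [Finset.mem_Icc] at hj
          obtain ⟨-, hh1, hh2⟩ := (h2 j).1 hc
          apply hs
          rcases T with _ | ⟨u, _ | ⟨v, R⟩⟩ <;> simp_all [startsVal]
          omega))]
      omega
  · rw [if_neg hCo, if_neg (fun hc => hCo ((h1.1 hc).1)),
      Finset.sum_eq_zero (fun j _ => if_neg (fun hc => hCo ((h2 j).1 hc).1))]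
    omega

lemma ind_split_top (n x : ℕ) (T : List ℕ) (hx1 : 1 ≤ x) (hxm : x ≤ n)
    (C0 C1 : Prop) (C2 : ℕ → Prop)
    (i0 : Decidable C0) (i1 : Decidable C1) (i2 : ∀ a : ℕ, Decidable (C2 a))
    (h1 : ¬ C1) (h2 : ∀ a, C2 a ↔ (C0 ∧ x = a)) :
    (@ite ℕ C0 i0 1 0) = (@ite ℕ C1 i1 1 0) +
      ∑ a ∈ Finset.Icc 1 n, (@ite ℕ (C2 a) (i2 a) 1 0) := by
  rw [if_neg h1,
    Finset.sum_eq_single_of_mem x (Finset.mem_Icc.2 ⟨hx1, hxm⟩)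
      (fun b _ hb => if_neg (fun hc => hb (((h2 b).1 hc).2 ▸ rfl))), zero_add]
  by_cases hC : C0
  · rw [if_pos hC, if_pos ((h2 x).2 ⟨hC, rfl⟩)]
  · rw [if_neg hC, if_neg (fun hc => hC ((h2 x).1 hc).1)]

lemma ind_split_nil (n : ℕ) (C0 C1 : Prop) (C2 : ℕ → Prop)
    (i0 : Decidable C0) (i1 : Decidable C1) (i2 : ∀ a : ℕ, Decidable (C2 a))
    (h1 : C1 ↔ C0) (h2 : ∀ a, ¬ C2 a) :
    (@ite ℕ C0 i0 1 0) = (@ite ℕ C1 i1 1 0) +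
      ∑ a ∈ Finset.Icc 1 n, (@ite ℕ (C2 a) (i2 a) 1 0) := by
  rw [Finset.sum_eq_zero (fun a _ => if_neg (h2 a)), add_zero]
  by_cases hC : C0
  · rw [if_pos hC, if_pos (h1.2 hC)]
  · rw [if_neg hC, if_neg (fun hc => hC (h1.1 hc))]

lemma cnt_sum_ind (P : List ℕ → Prop) (m : Fin 4 →₀ ℕ) :
    cnt P m = ∑ L ∈ listset (m 0),
      (if (L.length = m 1 ∧ svL L = m 2 ∧ dsvL L = m 3 ∧ P L) then 1 else 0) :=
  Finset.card_filter _ _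

lemma cnt_split_startsVal (a : ℕ) (m : Fin 4 →₀ ℕ) :
    cnt (fun _ => True) m = cnt (fun M => ¬ startsVal a M) m +
      ∑ j ∈ Finset.Icc 1 (a-1),
        cnt (fun M => M.head? = some j ∧ M.tail.head? = some a) m := by
  rw [cnt_sum_ind, cnt_sum_ind, Finset.sum_congr rfl
    (fun j _ => cnt_sum_ind (fun M => M.head? = some j ∧ M.tail.head? = some a) m),
    Finset.sum_comm, ← Finset.sum_add_distrib]
  refine Finset.sum_congr rfl (fun L hL => ?_)
  have hpos := (mem_listset.1 hL).1
  exact ind_split a L hpos _ _ _ _ _ _ (by tauto) (fun j => by tauto)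

lemma cnt_split_head (a : ℕ) (m : Fin 4 →₀ ℕ) :
    cnt (fun L => L.head? = some a) m =
      cnt (fun L => L.head? = some a ∧ ¬ startsVal a L.tail) m +
      ∑ j ∈ Finset.Icc 1 (a-1),
        cnt (fun L => L.head? = some a ∧ L.tail.head? = some j ∧
          L.tail.tail.head? = some a) m := by
  rw [cnt_sum_ind, cnt_sum_ind, Finset.sum_congr rfl (fun j _ => cnt_sum_ind _ m),
    Finset.sum_comm, ← Finset.sum_add_distrib]
  refine Finset.sum_congr rfl (fun L hL => ?_)
  have hpos := (mem_listset.1 hL).1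
  have hposT : ∀ x ∈ L.tail, 0 < x := fun x hx => hpos x (List.mem_of_mem_tail hx)
  exact ind_split a L.tail hposT _ _ _ _ _ _ (by tauto) (fun j => by tauto)

lemma cnt_split_top (m : Fin 4 →₀ ℕ) :
    cnt (fun _ => True) m = (if m = 0 then 1 else 0) +
      ∑ a ∈ Finset.Icc 1 (m 0), cnt (fun L => L.head? = some a) m := by
  have hnil : ((listset (m 0)).filter
      (fun L => L.length = m 1 ∧ svL L = m 2 ∧ dsvL L = m 3 ∧ L = [])).card
      = if m = 0 then 1 else 0 := by
    by_cases hm : m = 0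
    · subst hm
      rw [if_pos rfl]
      have : ((listset ((0 : Fin 4 →₀ ℕ) 0)).filter
          (fun L => L.length = (0 : Fin 4 →₀ ℕ) 1 ∧ svL L = (0 : Fin 4 →₀ ℕ) 2 ∧
            dsvL L = (0 : Fin 4 →₀ ℕ) 3 ∧ L = [])) = {[]} := by
        ext L
        simp only [Finset.mem_filter, Finset.mem_singleton, mem_listset]
        constructor
        · rintro ⟨-, -, -, -, rfl⟩; rfl
        · rintro rfl
          refine ⟨⟨by simp, by simp⟩, by simp, by simp, by simp, rfl⟩
      rw [this, Finset.card_singleton]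
    · rw [if_neg hm, Finset.card_eq_zero, Finset.eq_empty_iff_forall_notMem]
      rintro L hL
      rw [Finset.mem_filter, mem_listset] at hL
      obtain ⟨⟨-, hsum⟩, hlen, hsv, hdsv, rfl⟩ := hL
      apply hm
      have h0 : m 0 = 0 := by simpa using hsum.symm
      have h1 : m 1 = 0 := by simpa using hlen.symm
      have h2 : m 2 = 0 := by rw [← hsv]; simp
      have h3 : m 3 = 0 := by rw [← hdsv]; simp
      ext i
      fin_cases i <;> simpa
  rw [cnt_sum_ind, ← hnil, Finset.card_filter,
    Finset.sum_congr rfl (fun a _ => cnt_sum_ind (fun L => L.head? = some a) m),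
    Finset.sum_comm, ← Finset.sum_add_distrib]
  refine Finset.sum_congr rfl (fun L hL => ?_)
  obtain ⟨hpos, hsum⟩ := mem_listset.1 hL
  rcases L with _ | ⟨x, T⟩
  · -- empty list case
    exact ind_split_nil (m 0) _ _ _ _ _ _ (by tauto)
      (fun a => by rintro ⟨-, -, -, h⟩; simp at h)
  · have hx1 : 1 ≤ x := hpos x (by simp)
    have hxm : x ≤ m 0 := by
      simp only [List.sum_cons] at hsum; omega
    refine ind_split_top (m 0) x T hx1 hxm _ _ _ _ _ _
      (by rintro ⟨-, -, -, h⟩; simp at h) (fun b => ?_)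
    constructor
    · rintro ⟨hh1, hh2, hh3, hh⟩
      simp only [List.head?_cons, Option.some.injEq] at hh
      exact ⟨⟨hh1, hh2, hh3, trivial⟩, hh⟩
    · rintro ⟨⟨hh1, hh2, hh3, -⟩, rfl⟩
      exact ⟨hh1, hh2, hh3, rfl⟩

lemma ser_i (a : ℕ) (ha : 1 ≤ a) :
    ser (fun L => L.head? = some a ∧ ¬ startsVal a L.tail) =
      (MvPowerSeries.monomial (wt a 1 0 0)) 1 * ser (fun M => ¬ startsVal a M) := by
  apply ser_prepend a 0 0 ha
  · intro M _
    simp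
  · intro L hL
    exact hL.1
  · intro M _ hQ
    constructor
    · rw [svL_cons, if_neg hQ]
    · rw [dsvL_cons, if_neg hQ]

lemma ser_ii (a j : ℕ) (hj : 1 ≤ j) (hja : j < a) :
    ser (fun L => L.head? = some a ∧ L.tail.head? = some j ∧
        L.tail.tail.head? = some a) =
      (MvPowerSeries.monomial (wt a 1 1 (a-j))) 1 *
        ser (fun M => M.head? = some j ∧ M.tail.head? = some a) := by
  apply ser_prepend a 1 (a-j) (by omega)
  · intro M _
    simp
  · intro L hL
    exact hL.1
  · intro M _ hQ
    obtain ⟨h1, h2⟩ := hQ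
    rcases M with _ | ⟨x, M'⟩
    · simp at h1
    rcases M' with _ | ⟨y, R⟩
    · simp at h2
    have hx : x = j := by simpa using h1
    have hy : y = a := by simpa using h2
    have hs : startsVal a (x :: y :: R) :=
      ⟨by simp, by simp only [List.getD_cons_zero]; omega, by simpa using hy⟩
    constructor
    · rw [svL_cons, if_pos hs]
    · rw [dsvL_cons, if_pos hs]
      simp [hx]

lemma ser_iii (a j : ℕ) (hj : 1 ≤ j) (hja : j < a) :
    ser (fun M => M.head? = some j ∧ M.tail.head? = some a) =
      (MvPowerSeries.monomial (wt j 1 0 0)) 1 * ser (fun L => L.head? = some a) := by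
  apply ser_prepend j 0 0 hj
  · intro M _
    simp
  · intro L hL
    exact hL.1
  · intro M _ hQ
    rcases M with _ | ⟨x, R⟩
    · simp at hQ
    have hx : x = a := by simpa using hQ
    have hs : ¬ startsVal j (x :: R) := by
      rintro ⟨-, hlt, -⟩
      simp only [List.getD_cons_zero] at hlt
      omega
    constructor
    · rw [svL_cons, if_neg hs]
    · rw [dsvL_cons, if_neg hs]

lemma mono_eq (r l s t : ℕ) : (MvPowerSeries.monomial (wt r l s t)) 1 =
    Xv 0^r * Xv 1^l * Xv 2^s * Xv 3^t := by
  rw [MvPowerSeries.X_pow_eq, MvPowerSeries.X_pow_eq, MvPowerSeries.X_pow_eq,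
    MvPowerSeries.X_pow_eq, MvPowerSeries.monomial_mul_monomial,
    MvPowerSeries.monomial_mul_monomial, MvPowerSeries.monomial_mul_monomial]
  simp [wt]

lemma ser_coeff (P : List ℕ → Prop) (m : Fin 4 →₀ ℕ) :
    MvPowerSeries.coeff m (ser P) = (cnt P m : ℚ) := rfl

lemma serB (a : ℕ) : ser (fun L => L.head? = some a) =
    ser (fun L => L.head? = some a ∧ ¬ startsVal a L.tail) +
    ∑ j ∈ Finset.Icc 1 (a-1), ser (fun L => L.head? = some a ∧
      L.tail.head? = some j ∧ L.tail.tail.head? = some a) := by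
  apply MvPowerSeries.ext
  intro m
  rw [map_add, map_sum]
  simp only [ser_coeff]
  exact_mod_cast cnt_split_head a m

lemma serC (a : ℕ) : ser (fun _ => True) =
    ser (fun M => ¬ startsVal a M) +
    ∑ j ∈ Finset.Icc 1 (a-1), ser (fun M => M.head? = some j ∧
      M.tail.head? = some a) := by
  apply MvPowerSeries.ext
  intro m
  rw [map_add, map_sum]
  simp only [ser_coeff]
  exact_mod_cast cnt_split_startsVal a m

lemma FA_mul_B (a : ℕ) (ha : 1 ≤ a) :
    ser (fun L => L.head? = some a) * Bdsv a =
      (Xv 0)^a * Xv 1 * ser (fun _ => True) := by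
  have hG : ∀ j ∈ Finset.Icc 1 (a-1),
      ser (fun M => M.head? = some j ∧ M.tail.head? = some a) =
        (Xv 0^j * Xv 1) * ser (fun L => L.head? = some a) := by
    intro j hj
    obtain ⟨hj1, hj2⟩ := Finset.mem_Icc.1 hj
    rw [ser_iii a j hj1 (by omega), mono_eq]
    ring
  have hC : ser (fun M => ¬ startsVal a M) = ser (fun _ => True) -
      ∑ j ∈ Finset.Icc 1 (a-1), (Xv 0^j * Xv 1) * ser (fun L => L.head? = some a) := by
    have h := serC a
    rw [Finset.sum_congr rfl hG] at h
    linear_combination -h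
  have hFN : ser (fun L => L.head? = some a ∧ ¬ startsVal a L.tail) =
      (Xv 0^a * Xv 1) * (ser (fun _ => True) -
        ∑ j ∈ Finset.Icc 1 (a-1), (Xv 0^j * Xv 1) * ser (fun L => L.head? = some a)) := by
    rw [ser_i a ha, mono_eq, hC]
    ring
  have hP3 : ∀ j ∈ Finset.Icc 1 (a-1),
      ser (fun L => L.head? = some a ∧ L.tail.head? = some j ∧
        L.tail.tail.head? = some a) =
      (Xv 0^a * Xv 1 * Xv 2 * Xv 3^(a-j)) *
        ((Xv 0^j * Xv 1) * ser (fun L => L.head? = some a)) := by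
    intro j hj
    obtain ⟨hj1, hj2⟩ := Finset.mem_Icc.1 hj
    rw [ser_ii a j hj1 (by omega), hG j hj, mono_eq]
    ring
  have e1 : ser (fun L => L.head? = some a) = (Xv 0^a * Xv 1) *
        (ser (fun _ => True) - ∑ j ∈ Finset.Icc 1 (a-1),
          (Xv 0^j * Xv 1) * ser (fun L => L.head? = some a))
      + ∑ j ∈ Finset.Icc 1 (a-1),
        (Xv 0^a * Xv 1 * Xv 2 * Xv 3^(a-j)) *
          ((Xv 0^j * Xv 1) * ser (fun L => L.head? = some a)) := by
    conv_lhs => rw [serB a]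
    rw [hFN, Finset.sum_congr rfl hP3]
  have hsum : (Xv 1)^2 * (Xv 0)^a *
        (∑ j ∈ Finset.Icc 1 (a-1), (Xv 0)^j * (Xv 2 * (Xv 3)^(a-j) - 1)) *
          ser (fun L => L.head? = some a)
      = (∑ j ∈ Finset.Icc 1 (a-1),
          (Xv 0^a * Xv 1 * Xv 2 * Xv 3^(a-j)) *
            ((Xv 0^j * Xv 1) * ser (fun L => L.head? = some a)))
        - (Xv 0^a * Xv 1) * (∑ j ∈ Finset.Icc 1 (a-1),
            (Xv 0^j * Xv 1) * ser (fun L => L.head? = some a)) := by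
    rw [Finset.mul_sum, Finset.sum_mul, Finset.mul_sum, ← Finset.sum_sub_distrib]
    exact Finset.sum_congr rfl (fun j hj => by ring)
  unfold Bdsv
  linear_combination e1 - hsum

lemma Fdsv_eq : Fdsv = ser (fun _ => True) := by
  funext m
  show (((Finset.univ : Finset (Composition (m 0))).filter (fun c =>
      c.length = m 1 ∧ svL c.blocks = m 2 ∧ dsvL c.blocks = m 3)).card : ℚ)
      = ((cnt (fun _ => True) m : ℕ) : ℚ)
  suffices h : ((Finset.univ : Finset (Composition (m 0))).filter (fun c =>
      c.length = m 1 ∧ svL c.blocks = m 2 ∧ dsvL c.blocks = m 3)).card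
      = cnt (fun _ => True) m by exact_mod_cast h
  unfold cnt
  apply Finset.card_nbij Composition.blocks
  · intro c hc
    simp only [Finset.mem_coe, Finset.mem_filter] at hc
    simp only [Finset.mem_coe, Finset.mem_filter, mem_listset]
    refine ⟨⟨fun x hx => c.blocks_pos hx, c.blocks_sum⟩, ?_, hc.2.2.1, hc.2.2.2, trivial⟩
    rw [Composition.blocks_length]; exact hc.2.1
  · exact fun c _ c' _ h => blocks_inj _ h
  · intro L hL
    simp only [Finset.coe_filter, Set.mem_setOf_eq] at hL
    obtain ⟨hls, h1, h2, h3, -⟩ := hL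
    obtain ⟨hpos, hsum⟩ := mem_listset.1 hls
    refine ⟨⟨L, fun hi => hpos _ hi, hsum⟩, ?_, rfl⟩
    simp only [Finset.coe_filter, Set.mem_setOf_eq]
    refine ⟨Finset.mem_univ _, ?_, h2, h3⟩
    show (Composition.mk L _ _).length = m 1
    rw [← Composition.blocks_length]
    exact h1

lemma B_unit (a : ℕ) : Bdsv a * (Bdsv a)⁻¹ = 1 := by
  apply MvPowerSeries.mul_inv_cancel
  have : MvPowerSeries.constantCoeff (Bdsv a) = 1 := by
    simp [Bdsv, MvPowerSeries.constantCoeff_X]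
  rw [this]
  norm_num

lemma FA_eq (a : ℕ) (ha : 1 ≤ a) :
    ser (fun L => L.head? = some a) =
      (Xv 0)^a * Xv 1 * (Bdsv a)⁻¹ * ser (fun _ => True) := by
  have h := FA_mul_B a ha
  calc ser (fun L => L.head? = some a)
      = ser (fun L => L.head? = some a) * (Bdsv a * (Bdsv a)⁻¹) := by
        rw [B_unit a, mul_one]
    _ = (ser (fun L => L.head? = some a) * Bdsv a) * (Bdsv a)⁻¹ := by ring
    _ = ((Xv 0)^a * Xv 1 * ser (fun _ => True)) * (Bdsv a)⁻¹ := by rw [h]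
    _ = (Xv 0)^a * Xv 1 * (Bdsv a)⁻¹ * ser (fun _ => True) := by ring

lemma coeff_T_zero (a : ℕ) (m : Fin 4 →₀ ℕ) (h : m 0 < a) :
    MvPowerSeries.coeff m ((Xv 0)^a * Xv 1 * (Bdsv a)⁻¹) = 0 := by
  rw [MvPowerSeries.X_pow_eq, mul_assoc, MvPowerSeries.coeff_monomial_mul]
  rw [if_neg]
  intro hle
  have := Finsupp.le_def.1 hle 0
  simp [Finsupp.single_apply] at this
  omega

lemma main_result : Fdsv * (1 - Sdsv) = 1 := by
  apply MvPowerSeries.ext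
  intro m
  rw [MvPowerSeries.coeff_mul]
  have step1 : ∀ p ∈ Finset.HasAntidiagonal.antidiagonal m,
      MvPowerSeries.coeff p.1 Fdsv * MvPowerSeries.coeff p.2 (1 - Sdsv)
      = MvPowerSeries.coeff p.1 Fdsv * MvPowerSeries.coeff p.2 (1 : MvPowerSeries (Fin 4) ℚ)
        - ∑ a ∈ Finset.Icc 1 (m 0), MvPowerSeries.coeff p.1 Fdsv *
            MvPowerSeries.coeff p.2 ((Xv 0)^a * Xv 1 * (Bdsv a)⁻¹) := by
    intro p hp
    rw [map_sub, mul_sub]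
    congr 1
    have hS : MvPowerSeries.coeff p.2 Sdsv
        = ∑ a ∈ Finset.Icc 1 (p.2 0), MvPowerSeries.coeff p.2 ((Xv 0)^a * Xv 1 * (Bdsv a)⁻¹) := rfl
    have hsub : p.2 0 ≤ m 0 := by
      have := Finset.HasAntidiagonal.mem_antidiagonal.1 hp
      have := congrArg (fun f => f 0) this
      simp only [Finsupp.add_apply] at this
      omega
    rw [hS, Finset.sum_subset (Finset.Icc_subset_Icc_right hsub)
      (fun a ha hna => coeff_T_zero a p.2 (by
        rw [Finset.mem_Icc] at ha
        rw [Finset.mem_Icc] at hna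
        omega)), Finset.mul_sum]
  rw [Finset.sum_congr rfl step1, Finset.sum_sub_distrib, ← MvPowerSeries.coeff_mul,
    Finset.sum_comm]
  have step2 : ∀ a ∈ Finset.Icc 1 (m 0),
      (∑ p ∈ Finset.HasAntidiagonal.antidiagonal m, MvPowerSeries.coeff p.1 Fdsv *
        MvPowerSeries.coeff p.2 ((Xv 0)^a * Xv 1 * (Bdsv a)⁻¹))
      = (cnt (fun L => L.head? = some a) m : ℚ) := by
    intro a ha
    rw [← MvPowerSeries.coeff_mul]
    have : Fdsv * ((Xv 0)^a * Xv 1 * (Bdsv a)⁻¹) = ser (fun L => L.head? = some a) := by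
      rw [FA_eq a (Finset.mem_Icc.1 ha).1, Fdsv_eq]
      ring
    rw [this]
    rfl
  rw [Finset.sum_congr rfl step2, mul_one]
  have hF : MvPowerSeries.coeff m Fdsv = (cnt (fun _ => True) m : ℚ) := by
    rw [Fdsv_eq]; rfl
  rw [hF, MvPowerSeries.coeff_one]
  have := cnt_split_top m
  have hcast : (cnt (fun _ => True) m : ℚ)
      = (if m = 0 then 1 else 0) + ∑ a ∈ Finset.Icc 1 (m 0),
          (cnt (fun L => L.head? = some a) m : ℚ) := by
    rw [this]
    push_cast
    split <;> simp
  rw [hcast]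
  ring

end aux

/-- Theorem 3 of the paper: `F·(1 − Σ_{a≥1} x^a y B_a⁻¹) = 1`, i.e.
`F(x,y,p,d) = 1/(1 − Σ_{a≥1} x^a y/(1 − y²x^{a+1}((px^{a−1}−d^{a−1})/(x/d−1) − (x^{a−1}−1)/(x−1))))`. -/
theorem dsv_generating_function : Fdsv * (1 - Sdsv) = 1 := by
  exact main_result
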